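/- Let H ∈ ℝ^{d×d} be symmetric with eigenvalues λ_1, …, λ_d (counted with multiplicity), x⋆ ∈ ℝ^d, f(x) = ½(x−x⋆)ᵀH(x−x⋆), P a real polynomial, R ≥ 0, and v : Ω → ℝ^d a square-integrable random vector on a probability space Ω with E[v vᵀ] = R² I. If x_t = x⋆ + P(H)v, then E[f(x_t) − f(x⋆)] = (R²/2) ∑_{i=1}^d λ_i P(λ_i)². -/

import Mathlib

open Matrix Polynomial MeasureTheory


noncomputable def conjAlgHom {d : ℕ} (U : Matrix (Fin d) (Fin d) ℝ)
    (hU1 : star U * U = 1) (hU2 : U * star U = 1) :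
    Matrix (Fin d) (Fin d) ℝ →ₐ[ℝ] Matrix (Fin d) (Fin d) ℝ where
  toFun A := star U * A * U
  map_one' := by simp only [mul_one]; exact hU1
  map_mul' A B := by
    show star U * (A * B) * U = (star U * A * U) * (star U * B * U)
    have : star U * (A * B) * U = star U * A * (U * star U) * B * U := by
      rw [hU2]; noncomm_ring
    rw [this]; noncomm_ring
  map_zero' := by simp
  map_add' A B := by simp [mul_add, add_mul]
  commutes' r := by
    simp only [Algebra.algebraMap_eq_smul_one]
    rw [mul_smul_comm, smul_mul_assoc, mul_one, hU1]

theorem aeval_pi {d : ℕ} (lam : Fin d → ℝ) (P : Polynomial ℝ) :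
    aeval lam P = fun i => P.eval (lam i) := by
  funext i
  rw [show aeval lam P i = Pi.evalAlgHom ℝ (fun _ => ℝ) i (aeval lam P) from rfl,
    ← aeval_algHom_apply (Pi.evalAlgHom ℝ (fun _ => ℝ) i) lam P]
  simp [aeval_def]

theorem diag_conj {d : ℕ} (H : Matrix (Fin d) (Fin d) ℝ) (hH : H.IsHermitian)
    (P : Polynomial ℝ) :
    aeval H P = (hH.eigenvectorUnitary : Matrix (Fin d) (Fin d) ℝ) *
      diagonal (fun i => P.eval (hH.eigenvalues i)) *
      star (hH.eigenvectorUnitary : Matrix (Fin d) (Fin d) ℝ) := by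
  set U := (hH.eigenvectorUnitary : Matrix (Fin d) (Fin d) ℝ)
  have hU1 : star U * U = 1 := Unitary.coe_star_mul_self _
  have hU2 : U * star U = 1 := Unitary.coe_mul_star_self _
  have key : star U * aeval H P * U = diagonal (fun i => P.eval (hH.eigenvalues i)) := by
    have h1 : conjAlgHom U hU1 hU2 (aeval H P) = aeval (conjAlgHom U hU1 hU2 H) P :=
      (aeval_algHom_apply (conjAlgHom U hU1 hU2) H P).symm
    have h2 : conjAlgHom U hU1 hU2 H = diagonal hH.eigenvalues := by
      have := hH.spectral_theorem
      have e : (RCLike.ofReal ∘ hH.eigenvalues : Fin d → ℝ) = hH.eigenvalues := by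
        funext i; simp
      rw [Unitary.conjStarAlgAut_apply, e] at this
      show star U * H * U = _
      calc star U * H * U = star U * (U * diagonal hH.eigenvalues * star U) * U := by
            conv_lhs => rw [this]
      _ = (star U * U) * diagonal hH.eigenvalues * (star U * U) := by noncomm_ring
      _ = _ := by rw [hU1]; simp
    have h3 : aeval (diagonal hH.eigenvalues) P
        = diagonal (fun i => P.eval (hH.eigenvalues i)) := by
      rw [show diagonal hH.eigenvalues = diagonalAlgHom ℝ hH.eigenvalues from rfl,
        aeval_algHom_apply (diagonalAlgHom ℝ) hH.eigenvalues P, _root_.aeval_pi]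
      rfl
    calc star U * aeval H P * U = conjAlgHom U hU1 hU2 (aeval H P) := rfl
    _ = _ := by rw [h1, h2, h3]
  calc aeval H P = (U * star U) * aeval H P * (U * star U) := by rw [hU2]; noncomm_ring
  _ = U * (star U * aeval H P * U) * star U := by noncomm_ring
  _ = _ := by rw [key]

theorem int_mul2 {Ω : Type*} [MeasureSpace Ω] {f g : Ω → ℝ}
    (hf : MemLp f 2 (volume : Measure Ω)) (hg : MemLp g 2 (volume : Measure Ω)) :
    Integrable (fun ω => f ω * g ω) (volume : Measure Ω) := by
  have h := (((hf.add hg).integrable_sq.sub hf.integrable_sq).sub hg.integrable_sq).div_const 2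
  convert h using 1
  funext ω
  simp only [Pi.add_apply, Pi.sub_apply]
  ring

/-- Let `H` be a real symmetric `d × d` matrix with eigenvalues `λ_1, …, λ_d`,
`f(x) = ½(x−x⋆)ᵀH(x−x⋆)`, `P` a real polynomial, `R ≥ 0`, and `v` a
square-integrable random vector with `E[v vᵀ] = R² I`. If `x_t = x⋆ + P(H)v`,
then `E[f(x_t) − f(x⋆)] = (R²/2) ∑_i λ_i P(λ_i)²`. -/
theorem expected_function_suboptimality
    {Ω : Type*} [MeasureSpace Ω] [IsProbabilityMeasure (volume : Measure Ω)]
    (d : ℕ) (H : Matrix (Fin d) (Fin d) ℝ) (hH : H.IsHermitian)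
    (xstar : Fin d → ℝ)
    (f : (Fin d → ℝ) → ℝ)
    (hf : ∀ y, f y = (1 / 2) * ((y - xstar) ⬝ᵥ (H *ᵥ (y - xstar))))
    (P : Polynomial ℝ) (R : ℝ) (hR : 0 ≤ R)
    (v : Ω → Fin d → ℝ)
    (hv : ∀ i, MemLp (fun ω => v ω i) 2 (volume : Measure Ω))
    (hcov : ∀ i j, (∫ ω, v ω i * v ω j) = R ^ 2 * (1 : Matrix (Fin d) (Fin d) ℝ) i j)
    (xt : Ω → Fin d → ℝ) (hxt : ∀ ω, xt ω = xstar + (aeval H P) *ᵥ (v ω)) :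
    (∫ ω, (f (xt ω) - f xstar)) =
      R ^ 2 / 2 * ∑ i, hH.eigenvalues i * P.eval (hH.eigenvalues i) ^ 2 := by
  set U := (hH.eigenvectorUnitary : Matrix (Fin d) (Fin d) ℝ) with hUdef
  have hU1 : star U * U = 1 := Unitary.coe_star_mul_self _
  have hU2 : U * star U = 1 := Unitary.coe_mul_star_self _
  set lam := hH.eigenvalues
  set g : Fin d → ℝ := fun i => P.eval (lam i)
  set M := aeval H P with hMdef
  have hM : M = U * diagonal g * star U := diag_conj H hH P
  have hHspec : H = U * diagonal lam * star U := by
    have := hH.spectral_theorem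
    rwa [show (RCLike.ofReal ∘ hH.eigenvalues : Fin d → ℝ) = lam by
      funext i; simp [RCLike.ofReal_real_eq_id]; rfl] at this
  have hMT : Mᵀ = M := by
    have h1 : star M = M := by
      rw [hM]
      simp [Matrix.star_mul, star_star, mul_assoc, Matrix.star_eq_conjTranspose,
        diagonal_conjTranspose]
    rw [← conjTranspose_eq_transpose_of_trivial, ← Matrix.star_eq_conjTranspose]
    exact h1
  set A := Mᵀ * H * M with hAdef
  -- trace computation
  have hA : A = U * (diagonal g * diagonal lam * diagonal g) * star U := by
    rw [hAdef, hMT, hM, hHspec]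
    calc U * diagonal g * star U * (U * diagonal lam * star U) * (U * diagonal g * star U)
        = U * diagonal g * (star U * U) * diagonal lam * (star U * U) * diagonal g * star U := by
          noncomm_ring
      _ = _ := by rw [hU1]; noncomm_ring
  have htrace : A.trace = ∑ i, lam i * g i ^ 2 := by
    rw [hA, trace_mul_cycle, ← mul_assoc, hU1, one_mul]
    simp only [diagonal_mul_diagonal, trace_diagonal]
    congr 1; funext i; ring
  -- integrand
  have hf0 : f xstar = 0 := by rw [hf]; simp
  have hintegrand : ∀ ω, f (xt ω) - f xstar =
      ∑ i, ∑ j, A i j * (1 / 2 * (v ω i * v ω j)) := by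
    intro ω
    rw [hf0, sub_zero, hf, hxt]
    rw [show xstar + M *ᵥ v ω - xstar = M *ᵥ v ω from add_sub_cancel_left _ _]
    rw [mulVec_mulVec, dotProduct_mulVec, vecMul_mulVec, ← mul_assoc, ← hAdef]
    have hexp : (v ω ᵥ* A) ⬝ᵥ v ω = ∑ j, ∑ i, v ω i * A i j * v ω j := by
      simp [vecMul, dotProduct, Finset.sum_mul]
    rw [hexp, Finset.sum_comm, Finset.mul_sum]
    refine Finset.sum_congr rfl fun i _ => ?_
    rw [Finset.mul_sum]
    exact Finset.sum_congr rfl fun j _ => by ring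
  have hinteg : ∀ i j : Fin d, Integrable (fun ω => A i j * (1 / 2 * (v ω i * v ω j)))
      (volume : Measure Ω) := fun i j => ((int_mul2 (hv i) (hv j)).const_mul _).const_mul _
  calc (∫ ω, (f (xt ω) - f xstar))
      = ∫ ω, ∑ i, ∑ j, A i j * (1 / 2 * (v ω i * v ω j)) := by
        congr 1; funext ω; exact hintegrand ω
    _ = ∑ i, ∑ j, ∫ ω, A i j * (1 / 2 * (v ω i * v ω j)) := by
        rw [integral_finset_sum _ fun i _ => integrable_finset_sum _ fun j _ => hinteg i j]
        exact Finset.sum_congr rfl fun i _ => integral_finset_sum _ fun j _ => hinteg i j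
    _ = ∑ i, ∑ j, A i j * (1 / 2 * (R ^ 2 * (1 : Matrix (Fin d) (Fin d) ℝ) i j)) := by
        refine Finset.sum_congr rfl fun i _ => Finset.sum_congr rfl fun j _ => ?_
        rw [integral_const_mul, integral_const_mul, hcov]
    _ = ∑ i, A i i * (1 / 2 * R ^ 2) := by
        refine Finset.sum_congr rfl fun i _ => ?_
        simp [Matrix.one_apply, mul_ite, Finset.sum_ite_eq]
    _ = R ^ 2 / 2 * A.trace := by
        rw [trace, Finset.mul_sum]
        exact Finset.sum_congr rfl fun i _ => by simp [diag]; ring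
    _ = _ := by rw [htrace]
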